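/- Let A be a unital complex *-algebra that is algebraic and admits a pre-C*-norm ‖·‖. Then for every a ∈ A one has a*a ≤ ‖a‖²·1, i.e., ‖a‖²·1 − a*a is a positive element of A (a finite sum of elements of the form x*x). -/

import Mathlib

/-- A (possibly non-unital) complex algebra is *algebraic* if every element generates a
finite-dimensional subalgebra (equivalently, every element is a root of a nonzero
polynomial with complex coefficients). -/
def IsAlgebraicAlgebra (A : Type*) [NonUnitalRing A] [Module ℂ A] : Prop :=
  ∀ a : A, ∃ S : NonUnitalSubalgebra ℂ A, a ∈ S ∧ FiniteDimensional ℂ S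

/-- A pre-C*-norm on a complex `*`-algebra: a submultiplicative norm `σ` with
`σ (x* x) = σ x ^ 2`. -/
def HasPreCstarNorm (A : Type*) [NonUnitalRing A] [Module ℂ A] [Star A] : Prop :=
  ∃ σ : A → ℝ,
    (∀ a : A, σ a = 0 ↔ a = 0) ∧
    (∀ (c : ℂ) (a : A), σ (c • a) = ‖c‖ * σ a) ∧
    (∀ a b : A, σ (a + b) ≤ σ a + σ b) ∧
    (∀ a b : A, σ (a * b) ≤ σ a * σ b) ∧
    (∀ a : A, σ (star a * a) = σ a ^ 2)

/-- The involution is proper if `a* a = 0` implies `a = 0`. -/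
def HasProperInvolution (A : Type*) [NonUnitalRing A] [Star A] : Prop :=
  ∀ a : A, star a * a = 0 → a = 0

/-- Hermitian: every selfadjoint element has real spectrum (computed in the
unitization `ℂ ⊕ A`). -/
def IsHermitianStarAlgebra (A : Type*) [NonUnitalRing A] [Module ℂ A]
    [SMulCommClass ℂ A A] [IsScalarTower ℂ A A] [Star A] : Prop :=
  ∀ a : A, star a = a → ∀ z ∈ spectrum ℂ (a : Unitization ℂ A), z.im = 0

/-- Semisimple: the Jacobson radical is `{0}` (expressed via the unitization, whose
Jacobson radical meets `A` exactly in the Jacobson radical of `A`). -/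
def IsSemisimpleAlgebra (A : Type*) [NonUnitalRing A] [Module ℂ A]
    [SMulCommClass ℂ A A] [IsScalarTower ℂ A A] : Prop :=
  ∀ a : A, (a : Unitization ℂ A) ∈ (⊥ : Ideal (Unitization ℂ A)).jacobson → a = 0

/-- A positive element: a finite sum of elements of the form `a* a`. -/
def IsPositiveElem {A : Type*} [NonUnitalRing A] [Star A] (x : A) : Prop :=
  ∃ (n : ℕ) (f : Fin n → A), x = ∑ i, star (f i) * f i

set_option linter.unusedSectionVars false
set_option maxHeartbeats 1000000

open Polynomial

structure PCN (A : Type*) [Ring A] [Algebra ℂ A] [StarRing A] [StarModule ℂ A] where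
  σ : A → ℝ
  hzero : ∀ a, σ a = 0 ↔ a = 0
  hsmul : ∀ (c : ℂ) (a : A), σ (c • a) = ‖c‖ * σ a
  hadd : ∀ a b, σ (a + b) ≤ σ a + σ b
  hmul : ∀ a b, σ (a * b) ≤ σ a * σ b
  hstar : ∀ a, σ (star a * a) = σ a ^ 2

namespace PCN

variable {A : Type*} [Ring A] [Algebra ℂ A] [StarRing A] [StarModule ℂ A]
theorem zero' (P : PCN A) : P.σ 0 = 0 := (P.hzero 0).mpr rfl

theorem nonneg (P : PCN A) (a : A) : 0 ≤ P.σ a := by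
  have h := P.hadd a (-a)
  have h2 : -a = ((-1 : ℂ) • a) := by simp
  rw [add_neg_cancel, P.zero', h2, P.hsmul] at h
  simp at h
  linarith

theorem sum_le (P : PCN A) {ι : Type*} (s : Finset ι) (f : ι → A) :
    P.σ (∑ i ∈ s, f i) ≤ ∑ i ∈ s, P.σ (f i) := by
  classical
  induction s using Finset.induction with
  | empty => simp [P.zero']
  | insert a s h ih =>
    rw [Finset.sum_insert h, Finset.sum_insert h]
    exact le_trans (P.hadd _ _) (by linarith)

theorem pow_two_pow (P : PCN A) {x : A} (hx : star x = x) (m : ℕ) :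
    P.σ (x ^ (2 ^ m)) = P.σ x ^ (2 ^ m) := by
  induction m with
  | zero => simp
  | succ m ih =>
    have h1 : x ^ 2 ^ (m + 1) = star (x ^ 2 ^ m) * x ^ 2 ^ m := by
      rw [star_pow, hx, ← pow_add, show (2:ℕ) ^ (m+1) = 2 ^ m + 2 ^ m by ring]
    rw [h1, P.hstar, ih, ← pow_mul, show (2:ℕ) ^ m * 2 = 2 ^ (m+1) by ring]

theorem nilp (P : PCN A) {x : A} (hx : star x = x) (hn : IsNilpotent x) : x = 0 := by
  obtain ⟨n, hn⟩ := hn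
  rcases Nat.eq_zero_or_pos n with h0 | h0
  · subst h0; simp at hn
    calc x = x * 1 := by rw [mul_one]
    _ = 0 := by rw [hn, mul_zero]
  · have h1 : x ^ (2 ^ n) = 0 := by
      have : 2 ^ n = n + (2 ^ n - n) := by
        have := Nat.lt_two_pow_self (n := n)
        omega
      rw [this, pow_add, hn, zero_mul]
    have h2 := P.pow_two_pow hx n
    rw [h1, P.zero'] at h2
    have h3 : P.σ x = 0 := by
      have := pow_eq_zero_iff (n := 2 ^ n) (by positivity) |>.mp h2.symm
      exact this
    exact (P.hzero x).mp h3

end PCN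

section Poly

variable {A : Type*} [Ring A] [Algebra ℂ A] [StarRing A] [StarModule ℂ A]

theorem star_aeval {x : A} (hx : star x = x) (p : ℂ[X]) :
    star (aeval x p) = aeval x (p.map (starRingEnd ℂ)) := by
  induction p using Polynomial.induction_on' with
  | add p q hp hq => rw [map_add, star_add, hp, hq, Polynomial.map_add, map_add]
  | monomial n a =>
    rw [Polynomial.map_monomial, aeval_monomial, aeval_monomial, star_mul, star_pow, hx,
      ← algebraMap_star_comm, ← Algebra.commutes, starRingEnd_apply]

set_option linter.unusedSectionVars false in
theorem aeval_comm (x : A) (p q : ℂ[X]) :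
    (aeval x p) * (aeval x q) = (aeval x q) * (aeval x p) := by
  rw [← map_mul, ← map_mul, mul_comm]

end Poly

section Minpoly

variable {A : Type*} [Ring A] [Algebra ℂ A] [StarRing A] [StarModule ℂ A]

theorem PCN.aeval_nilp (P : PCN A) {x : A} (hx : star x = x) (p : ℂ[X])
    (hn : IsNilpotent (aeval x p)) : aeval x p = 0 := by
  obtain ⟨k, hk⟩ := hn
  set n := aeval x p with hndef
  have hm : star n * n = aeval x (p.map (starRingEnd ℂ) * p) := by
    rw [map_mul, star_aeval hx]
  have hmsa : star (star n * n) = star n * n := by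
    rw [star_mul, star_star]
  have hmnil : IsNilpotent (star n * n) := by
    refine ⟨k, ?_⟩
    rw [hm, ← map_pow, show (p.map (starRingEnd ℂ) * p) ^ k
      = p.map (starRingEnd ℂ) ^ k * p ^ k by ring, map_mul, map_pow, map_pow, ← hndef, hk,
      mul_zero]
  have hm0 : star n * n = 0 := P.nilp hmsa hmnil
  have : P.σ n ^ 2 = 0 := by rw [← P.hstar, hm0, P.zero']
  have : P.σ n = 0 := by
    exact pow_eq_zero_iff (n := 2) (by norm_num) |>.mp this
  exact (P.hzero n).mp this

variable [Nontrivial A]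

theorem minpoly_eq_prod (P : PCN A) (halg : ∀ a : A, IsAlgebraic ℂ a)
    {x : A} (hx : star x = x) :
    minpoly ℂ x = ∏ τ ∈ (minpoly ℂ x).roots.toFinset, (X - C τ) := by
  classical
  have hint : IsIntegral ℂ x := (halg x).isIntegral
  have hμ : (minpoly ℂ x).Monic := minpoly.monic hint
  set μ := minpoly ℂ x with hμdef
  set ν := ∏ τ ∈ μ.roots.toFinset, (X - C τ) with hν
  have hνmonic : ν.Monic := monic_prod_of_monic _ _ fun τ _ => monic_X_sub_C τ
  have hsplit : μ = (μ.roots.map fun a => X - C a).prod :=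
    (IsAlgClosed.splits μ).eq_prod_roots_of_monic hμ
  rw [prod_multiset_root_eq_finset_root] at hsplit
  have key : μ ∣ ν ^ μ.natDegree := by
    refine dvd_trans (b := ∏ τ ∈ μ.roots.toFinset, (X - C τ) ^ μ.natDegree) ?_ ?_
    · conv_lhs => rw [hsplit]
      refine Finset.prod_dvd_prod_of_dvd _ _ (fun τ hτ => ?_)
      refine pow_dvd_pow _ ?_
      rw [← Polynomial.count_roots]
      exact (Multiset.count_le_card _ _).trans μ.card_roots'
    · rw [hν, ← Finset.prod_pow]
  have hνnil : IsNilpotent (aeval x ν) := by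
    refine ⟨μ.natDegree, ?_⟩
    obtain ⟨c, hc⟩ := key
    rw [← map_pow, hc, map_mul, hμdef, minpoly.aeval, zero_mul]
  have hν0 : aeval x ν = 0 := P.aeval_nilp hx ν hνnil
  obtain ⟨c, hc⟩ := minpoly.dvd ℂ x hν0
  rw [← hμdef] at hc
  have hc0 : c ≠ 0 := by
    rintro rfl
    rw [mul_zero] at hc
    exact hνmonic.ne_zero hc
  have hd1 : ν.natDegree ≤ μ.natDegree := by
    have h1 : ν.natDegree = ∑ τ ∈ μ.roots.toFinset, ((X : ℂ[X]) - C τ).natDegree :=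
      natDegree_prod _ _ fun τ _ => X_sub_C_ne_zero τ
    have h2 : ν.natDegree = μ.roots.toFinset.card := by
      rw [h1]; simp [natDegree_X_sub_C]
    rw [h2]
    exact (Multiset.toFinset_card_le _).trans μ.card_roots'
  have hdc : c.natDegree = 0 := by
    have h3 := natDegree_mul hμ.ne_zero hc0
    rw [← hc] at h3
    omega
  have hcC : c = C (c.coeff 0) := Polynomial.eq_C_of_natDegree_eq_zero hdc
  have hlc : (μ * c).leadingCoeff = 1 := by rw [← hc]; exact hνmonic
  rw [leadingCoeff_mul, hμ.leadingCoeff, one_mul, hcC, leadingCoeff_C] at hlc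
  rw [hc, hcC, hlc, map_one, mul_one]

theorem minpoly_dvd_of_root_vanish (P : PCN A) (halg : ∀ a : A, IsAlgebraic ℂ a)
    {x : A} (hx : star x = x) (q : ℂ[X])
    (hq : ∀ τ ∈ (minpoly ℂ x).roots, q.eval τ = 0) : minpoly ℂ x ∣ q := by
  classical
  rw [minpoly_eq_prod P halg hx]
  refine Finset.prod_dvd_of_coprime (fun a _ b _ h => ?_) fun τ hτ => ?_
  · exact Polynomial.pairwise_coprime_X_sub_C Function.injective_id h
  · exact dvd_iff_isRoot.mpr (hq τ (Multiset.mem_toFinset.mp hτ))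

theorem aeval_eq_zero_of_root_vanish (P : PCN A) (halg : ∀ a : A, IsAlgebraic ℂ a)
    {x : A} (hx : star x = x) (q : ℂ[X])
    (hq : ∀ τ ∈ (minpoly ℂ x).roots, q.eval τ = 0) : aeval x q = 0 := by
  obtain ⟨c, hc⟩ := minpoly_dvd_of_root_vanish P halg hx q hq
  rw [hc, map_mul, minpoly.aeval, zero_mul]

end Minpoly

section Proj

variable {A : Type*} [Ring A] [Algebra ℂ A] [StarRing A] [StarModule ℂ A] [Nontrivial A]

open Classical in
noncomputable def lag (x : A) (τ : ℂ) : ℂ[X] :=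
  Lagrange.basis (minpoly ℂ x).roots.toFinset id τ

theorem lag_eval_self {x : A} {τ : ℂ} (hτ : τ ∈ (minpoly ℂ x).roots) :
    (lag x τ).eval τ = 1 :=
  Lagrange.eval_basis_self (Set.injOn_id _) (Multiset.mem_toFinset.mpr hτ)

theorem lag_eval_ne {x : A} {τ τ' : ℂ} (hτ' : τ' ∈ (minpoly ℂ x).roots) (hne : τ ≠ τ') :
    (lag x τ).eval τ' = 0 :=
  Lagrange.eval_basis_of_ne (v := id) (s := (minpoly ℂ x).roots.toFinset) hne
    (Multiset.mem_toFinset.mpr hτ')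

theorem lagE_ne_zero (halg : ∀ a : A, IsAlgebraic ℂ a) {x : A} {τ : ℂ}
    (hτ : τ ∈ (minpoly ℂ x).roots) : aeval x (lag x τ) ≠ 0 := by
  intro h
  obtain ⟨c, hc⟩ := minpoly.dvd ℂ x h
  have h1 : (lag x τ).eval τ = 0 := by
    rw [hc, eval_mul, (Polynomial.mem_roots'.mp hτ).2, zero_mul]
  rw [lag_eval_self hτ] at h1
  exact one_ne_zero h1

theorem lagE_idem (P : PCN A) (halg : ∀ a : A, IsAlgebraic ℂ a) {x : A} (hx : star x = x)
    {τ : ℂ} (hτ : τ ∈ (minpoly ℂ x).roots) :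
    aeval x (lag x τ) * aeval x (lag x τ) = aeval x (lag x τ) := by
  have h := aeval_eq_zero_of_root_vanish P halg hx (lag x τ * lag x τ - lag x τ) ?_
  · rw [map_sub, map_mul] at h
    exact sub_eq_zero.mp h
  · intro τ' hτ'
    by_cases hne : τ = τ'
    · subst hne; simp [eval_mul, lag_eval_self hτ]
    · simp [eval_mul, lag_eval_ne hτ' hne]

theorem lagE_mul_left (P : PCN A) (halg : ∀ a : A, IsAlgebraic ℂ a) {x : A} (hx : star x = x)
    {τ : ℂ} (hτ : τ ∈ (minpoly ℂ x).roots) :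
    x * aeval x (lag x τ) = τ • aeval x (lag x τ) := by
  have h := aeval_eq_zero_of_root_vanish P halg hx (X * lag x τ - τ • lag x τ) ?_
  · rw [map_sub, map_mul, map_smul, aeval_X] at h
    exact sub_eq_zero.mp h
  · intro τ' hτ'
    by_cases hne : τ = τ'
    · subst hne; simp [eval_mul, lag_eval_self hτ]
    · simp [eval_mul, lag_eval_ne hτ' hne]

theorem lagE_mul_right (P : PCN A) (halg : ∀ a : A, IsAlgebraic ℂ a) {x : A} (hx : star x = x)
    {τ : ℂ} (hτ : τ ∈ (minpoly ℂ x).roots) :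
    aeval x (lag x τ) * x = τ • aeval x (lag x τ) := by
  have h := aeval_eq_zero_of_root_vanish P halg hx (lag x τ * X - τ • lag x τ) ?_
  · rw [map_sub, map_mul, map_smul, aeval_X] at h
    exact sub_eq_zero.mp h
  · intro τ' hτ'
    by_cases hne : τ = τ'
    · subst hne; simp [eval_mul, lag_eval_self hτ, mul_comm]
    · simp [eval_mul, lag_eval_ne hτ' hne]

theorem lagP_ne_zero (P : PCN A) (halg : ∀ a : A, IsAlgebraic ℂ a) {x : A}
    {τ : ℂ} (hτ : τ ∈ (minpoly ℂ x).roots) :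
    star (aeval x (lag x τ)) * aeval x (lag x τ) ≠ 0 := by
  intro h
  have h1 : P.σ (aeval x (lag x τ)) ^ 2 = 0 := by rw [← P.hstar, h, P.zero']
  have h2 : P.σ (aeval x (lag x τ)) = 0 := by
    exact pow_eq_zero_iff (n := 2) (by norm_num) |>.mp h1
  exact lagE_ne_zero halg hτ ((P.hzero _).mp h2)

theorem lagP_sigma_pos (P : PCN A) (halg : ∀ a : A, IsAlgebraic ℂ a) {x : A}
    {τ : ℂ} (hτ : τ ∈ (minpoly ℂ x).roots) :
    0 < P.σ (star (aeval x (lag x τ)) * aeval x (lag x τ)) := by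
  rcases (P.nonneg (star (aeval x (lag x τ)) * aeval x (lag x τ))).lt_or_eq with h | h
  · exact h
  · exact absurd ((P.hzero _).mp h.symm) (lagP_ne_zero P halg hτ)

theorem root_real (P : PCN A) (halg : ∀ a : A, IsAlgebraic ℂ a) {x : A} (hx : star x = x)
    {τ : ℂ} (hτ : τ ∈ (minpoly ℂ x).roots) : (starRingEnd ℂ) τ = τ := by
  set e := aeval x (lag x τ) with he
  set p := star e * e with hp
  have hsp : star p = p := by rw [hp, star_mul, star_star]
  have h1 : p * x = τ • p := by
    rw [hp, mul_assoc, lagE_mul_right P halg hx hτ, mul_smul_comm]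
  have h3 : x * p = p * x := by
    rw [hp, he, star_aeval hx, ← map_mul]
    have h5 := aeval_comm x (X : ℂ[X]) (Polynomial.map (starRingEnd ℂ) (lag x τ) * lag x τ)
    rwa [aeval_X] at h5
  have h2 : x * p = (starRingEnd ℂ) τ • p := by
    have := congrArg star h1
    rw [star_mul, hsp, star_smul, hsp, hx] at this
    exact this
  rw [h3, h1] at h2
  have h4 : ((starRingEnd ℂ) τ - τ) • p = 0 := by rw [sub_smul, h2, sub_self]
  rcases smul_eq_zero.mp h4 with h | h
  · exact sub_eq_zero.mp h
  · exact absurd h (lagP_ne_zero P halg hτ)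

theorem root_abs_le (P : PCN A) (halg : ∀ a : A, IsAlgebraic ℂ a) {x : A} (hx : star x = x)
    {τ : ℂ} (hτ : τ ∈ (minpoly ℂ x).roots) : ‖τ‖ ≤ P.σ x := by
  set e := aeval x (lag x τ) with he
  set p := star e * e with hp
  have h1 : p * x = τ • p := by
    rw [hp, mul_assoc, lagE_mul_right P halg hx hτ, mul_smul_comm]
  have h2 : P.σ (p * x) ≤ P.σ p * P.σ x := P.hmul p x
  rw [h1, P.hsmul] at h2
  have h3 : 0 < P.σ p := lagP_sigma_pos P halg hτ
  have h4 : ‖τ‖ = ‖τ‖ := rfl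
  nlinarith [h2, h3]

end Proj

section SigmaLe

variable {A : Type*} [Ring A] [Algebra ℂ A] [StarRing A] [StarModule ℂ A] [Nontrivial A]

open Classical in
theorem sigma_le_of_roots (P : PCN A) (halg : ∀ a : A, IsAlgebraic ℂ a) {x : A}
    (hx : star x = x) {r : ℝ} (hr : 0 ≤ r)
    (hroot : ∀ τ ∈ (minpoly ℂ x).roots, ‖τ‖ ≤ r) : P.σ x ≤ r := by
  set s := (minpoly ℂ x).roots.toFinset with hs
  have decomp : ∀ k : ℕ, x ^ k = ∑ τ ∈ s, τ ^ k • aeval x (lag x τ) := by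
    intro k
    have h := aeval_eq_zero_of_root_vanish P halg hx
      (X ^ k - ∑ τ ∈ s, τ ^ k • lag x τ) ?_
    · rw [map_sub, map_pow, aeval_X, map_sum] at h
      have h2 : ∀ τ ∈ s, aeval x (τ ^ k • lag x τ) = τ ^ k • aeval x (lag x τ) := by
        intro τ _; rw [map_smul]
      rw [Finset.sum_congr rfl h2] at h
      exact sub_eq_zero.mp h
    · intro τ' hτ'
      rw [eval_sub, eval_pow, eval_X, eval_finset_sum]
      rw [Finset.sum_eq_single τ']
      · simp [lag_eval_self hτ']
      · intro τ hτs hne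
        simp [lag_eval_ne hτ' (by exact hne)]
      · intro hn; exact absurd (Multiset.mem_toFinset.mpr hτ') hn
  set Cst := ∑ τ ∈ s, P.σ (aeval x (lag x τ)) with hC
  have hC0 : 0 ≤ Cst := Finset.sum_nonneg fun τ _ => P.nonneg _
  have bound : ∀ m : ℕ, P.σ x ^ 2 ^ m ≤ r ^ 2 ^ m * Cst := by
    intro m
    rw [← P.pow_two_pow hx, decomp (2 ^ m)]
    refine le_trans (P.sum_le _ _) ?_
    rw [hC, Finset.mul_sum]
    refine Finset.sum_le_sum fun τ hτ => ?_
    rw [P.hsmul]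
    have h1 : ‖τ ^ 2 ^ m‖ ≤ r ^ 2 ^ m := by
      rw [norm_pow]
      exact pow_le_pow_left₀ (norm_nonneg τ) (hroot τ (Multiset.mem_toFinset.mp hτ)) _
    exact mul_le_mul_of_nonneg_right h1 (P.nonneg _)
  by_contra hlt
  push_neg at hlt
  rcases hr.lt_or_eq with hr0 | hr0
  · set t := P.σ x / r with ht
    have ht1 : 1 < t := (one_lt_div hr0).mpr hlt
    have htm : ∀ m : ℕ, t ^ 2 ^ m ≤ Cst := by
      intro m
      rw [ht, div_pow, div_le_iff₀ (by positivity)]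
      calc P.σ x ^ 2 ^ m ≤ r ^ 2 ^ m * Cst := bound m
        _ = Cst * r ^ 2 ^ m := by ring
    obtain ⟨m, hm⟩ := pow_unbounded_of_one_lt Cst ht1
    have : t ^ m ≤ t ^ 2 ^ m := pow_le_pow_right₀ ht1.le (Nat.lt_two_pow_self (n := m)).le
    exact absurd (le_trans this (htm m)) (not_le.mpr hm)
  · have h1 := bound 1
    rw [← hr0] at hlt h1
    simp at h1
    nlinarith [h1, hlt]

end SigmaLe

section Shift

variable {A : Type*} [Ring A] [Algebra ℂ A] [StarRing A] [StarModule ℂ A] [Nontrivial A]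

theorem root_shift (halg : ∀ a : A, IsAlgebraic ℂ a) (c : ℂ) (x : A) {τ : ℂ}
    (hτ : τ ∈ (minpoly ℂ (c • (1 : A) - x)).roots) : c - τ ∈ (minpoly ℂ x).roots := by
  have hν : aeval (c • (1 : A) - x) ((minpoly ℂ x).comp (C c - X)) = 0 := by
    rw [aeval_comp]
    have h1 : aeval (c • (1 : A) - x) (C c - X) = x := by
      rw [map_sub, aeval_C, aeval_X, Algebra.algebraMap_eq_smul_one]
      abel
    rw [h1, minpoly.aeval]
  obtain ⟨d, hd⟩ := minpoly.dvd ℂ _ hν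
  have h2 : ((minpoly ℂ x).comp (C c - X)).eval τ = 0 := by
    rw [hd, eval_mul, (Polynomial.mem_roots'.mp hτ).2, zero_mul]
  rw [eval_comp, eval_sub, eval_C, eval_X] at h2
  exact Polynomial.mem_roots'.mpr ⟨minpoly.ne_zero (halg x).isIntegral, h2⟩

theorem root_shift' (halg : ∀ a : A, IsAlgebraic ℂ a) (c : ℂ) (x : A) {τ : ℂ}
    (hτ : τ ∈ (minpoly ℂ x).roots) : c - τ ∈ (minpoly ℂ (c • (1 : A) - x)).roots := by
  have h : c • (1 : A) - (c • (1 : A) - x) = x := by abel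
  exact root_shift halg c (c • (1 : A) - x) (by rw [h]; exact hτ)

theorem root_neg (halg : ∀ a : A, IsAlgebraic ℂ a) (x : A) {τ : ℂ}
    (hτ : τ ∈ (minpoly ℂ x).roots) : -τ ∈ (minpoly ℂ (-x)).roots := by
  have h := root_shift' halg 0 x hτ
  rw [zero_sub] at h
  have h2 : (0 : ℂ) • (1 : A) - x = -x := by rw [zero_smul, zero_sub]
  rwa [h2] at h

theorem sa_smul_one_sub {y : A} (hy : star y = y) (t : ℝ) :
    star ((t : ℂ) • (1 : A) - y) = (t : ℂ) • (1 : A) - y := by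
  rw [star_sub, star_smul, star_one, hy, Complex.star_def, Complex.conj_ofReal]

theorem shifted_sigma_le (P : PCN A) (halg : ∀ a : A, IsAlgebraic ℂ a) {y : A}
    (hy : star y = y) (hyr : ∀ τ ∈ (minpoly ℂ y).roots, 0 ≤ τ.re) :
    P.σ ((P.σ y : ℂ) • (1 : A) - y) ≤ P.σ y := by
  refine sigma_le_of_roots P halg (sa_smul_one_sub hy (P.σ y)) (P.nonneg y) ?_
  intro τ' hτ'
  have hβ : (P.σ y : ℂ) - τ' ∈ (minpoly ℂ y).roots := root_shift halg _ y hτ'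
  set β := (P.σ y : ℂ) - τ' with hβdef
  have hβre : (β.re : ℂ) = β := Complex.conj_eq_iff_re.mp (root_real P halg hy hβ)
  have hβabs : ‖β‖ ≤ P.σ y := root_abs_le P halg hy hβ
  have hβ0 : 0 ≤ β.re := hyr β hβ
  have hβle : β.re ≤ P.σ y := le_trans (Complex.re_le_norm β) hβabs
  have hτeq : τ' = ((P.σ y - β.re : ℝ) : ℂ) := by
    push_cast
    rw [hβre, hβdef]
    ring
  rw [hτeq, Complex.norm_real, Real.norm_eq_abs]
  rw [abs_le]
  constructor <;> linarith

theorem add_roots_nonneg (P : PCN A) (halg : ∀ a : A, IsAlgebraic ℂ a) {y z : A}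
    (hy : star y = y) (hz : star z = z)
    (hyr : ∀ τ ∈ (minpoly ℂ y).roots, 0 ≤ τ.re)
    (hzr : ∀ τ ∈ (minpoly ℂ z).roots, 0 ≤ τ.re) :
    ∀ τ ∈ (minpoly ℂ (y + z)).roots, 0 ≤ τ.re := by
  intro τ hτ
  have hw : star (y + z) = y + z := by rw [star_add, hy, hz]
  have hτre : (τ.re : ℂ) = τ := Complex.conj_eq_iff_re.mp (root_real P halg hw hτ)
  set s : ℝ := P.σ y + P.σ z with hs
  have hmem : (s : ℂ) - τ ∈ (minpoly ℂ ((s : ℂ) • (1 : A) - (y + z))).roots :=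
    root_shift' halg _ (y + z) hτ
  have habs : ‖(s : ℂ) - τ‖ ≤ P.σ ((s : ℂ) • (1 : A) - (y + z)) :=
    root_abs_le P halg (sa_smul_one_sub hw s) hmem
  have hsplitel : (s : ℂ) • (1 : A) - (y + z)
      = ((P.σ y : ℂ) • (1 : A) - y) + ((P.σ z : ℂ) • (1 : A) - z) := by
    rw [hs]
    push_cast
    rw [add_smul]
    abel
  have hbound : P.σ ((s : ℂ) • (1 : A) - (y + z)) ≤ s := by
    rw [hsplitel]
    refine le_trans (P.hadd _ _) ?_
    rw [hs]
    exact add_le_add (shifted_sigma_le P halg hy hyr) (shifted_sigma_le P halg hz hzr)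
  rw [show (s : ℂ) - τ = ((s - τ.re : ℝ) : ℂ) by rw [Complex.ofReal_sub, hτre],
    Complex.norm_real, Real.norm_eq_abs] at habs
  have := le_trans habs hbound
  rw [abs_le] at this
  linarith [this.2]

theorem sq_roots_nonneg (P : PCN A) (halg : ∀ a : A, IsAlgebraic ℂ a) {v : A}
    (hv : star v = v) : ∀ τ ∈ (minpoly ℂ (v * v)).roots, 0 ≤ τ.re := by
  classical
  intro τ hτ
  set s := (minpoly ℂ v).roots.toFinset with hsdef
  have hcomp : (∏ β ∈ s, ((X : ℂ[X]) - C (β ^ 2))).comp (X ^ 2)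
      = minpoly ℂ v * ∏ β ∈ s, (X + C β) := by
    rw [prod_comp]
    have h1 : ∀ β ∈ s, ((X : ℂ[X]) - C (β ^ 2)).comp (X ^ 2)
        = (X - C β) * (X + C β) := by
      intro β _
      rw [sub_comp, X_comp, C_comp, show C (β ^ 2) = (C β) ^ 2 by rw [map_pow]]
      ring
    rw [Finset.prod_congr rfl h1, Finset.prod_mul_distrib, hsdef, ← minpoly_eq_prod P halg hv]
  have hQ0 : aeval (v * v) (∏ β ∈ s, ((X : ℂ[X]) - C (β ^ 2))) = 0 := by
    have h1 : aeval v ((∏ β ∈ s, ((X : ℂ[X]) - C (β ^ 2))).comp (X ^ 2)) = 0 := by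
      rw [hcomp, map_mul, minpoly.aeval, zero_mul]
    rw [aeval_comp, map_pow, aeval_X, pow_two] at h1
    exact h1
  obtain ⟨c, hc⟩ := minpoly.dvd ℂ (v * v) hQ0
  have h2 : (∏ β ∈ s, ((X : ℂ[X]) - C (β ^ 2))).eval τ = 0 := by
    rw [hc, eval_mul, (Polynomial.mem_roots'.mp hτ).2, zero_mul]
  rw [eval_prod] at h2
  obtain ⟨β, hβs, hβ⟩ := Finset.prod_eq_zero_iff.mp h2
  rw [eval_sub, eval_X, eval_C, sub_eq_zero] at hβ
  have hβroot : β ∈ (minpoly ℂ v).roots := Multiset.mem_toFinset.mp hβs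
  have hβre : (β.re : ℂ) = β := Complex.conj_eq_iff_re.mp (root_real P halg hv hβroot)
  rw [hβ, ← hβre]
  have : ((β.re : ℂ)) ^ 2 = ((β.re ^ 2 : ℝ) : ℂ) := by push_cast; ring
  rw [this, Complex.ofReal_re]
  positivity

theorem roots_nonneg_of_idem (halg : ∀ a : A, IsAlgebraic ℂ a) {y : A} {t : ℝ}
    (ht : 0 ≤ t) (h : y * y = (t : ℂ) • y) :
    ∀ τ ∈ (minpoly ℂ y).roots, 0 ≤ τ.re := by
  intro τ hτ
  have h0 : aeval y ((X : ℂ[X]) * X - (t : ℂ) • X) = 0 := by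
    rw [map_sub, map_mul, map_smul, aeval_X]
    exact sub_eq_zero.mpr h
  obtain ⟨c, hc⟩ := minpoly.dvd ℂ y h0
  have h2 : ((X : ℂ[X]) * X - (t : ℂ) • X).eval τ = 0 := by
    rw [hc, eval_mul, (Polynomial.mem_roots'.mp hτ).2, zero_mul]
  rw [eval_sub, eval_mul, eval_X, eval_smul, eval_X, smul_eq_mul] at h2
  have h3 : τ * (τ - (t : ℂ)) = 0 := by ring_nf; ring_nf at h2; linear_combination h2
  rcases mul_eq_zero.mp h3 with h4 | h4
  · rw [h4]; simp
  · rw [sub_eq_zero.mp h4]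
    simpa using ht

theorem eq_zero_of_roots_zero (P : PCN A) (halg : ∀ a : A, IsAlgebraic ℂ a) {u : A}
    (hu : star u = u) (h : ∀ τ ∈ (minpoly ℂ u).roots, τ = 0) : u = 0 := by
  classical
  apply P.nilp hu
  have hμ : minpoly ℂ u = X ^ (minpoly ℂ u).roots.toFinset.card := by
    have hconst : ∏ τ ∈ (minpoly ℂ u).roots.toFinset, ((X : ℂ[X]) - C τ)
        = ∏ _τ ∈ (minpoly ℂ u).roots.toFinset, (X : ℂ[X]) := by
      refine Finset.prod_congr rfl fun τ hτs => ?_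
      rw [h τ (Multiset.mem_toFinset.mp hτs)]
      simp
    conv_lhs => rw [minpoly_eq_prod P halg hu, hconst, Finset.prod_const]
  have h2 := minpoly.aeval ℂ u
  rw [hμ, map_pow, aeval_X] at h2
  exact ⟨_, h2⟩

end Shift

section EvalConj

open Polynomial

theorem eval_map_conj (g : Polynomial ℂ) (τ : ℂ) :
    (g.map (starRingEnd ℂ)).eval τ = (starRingEnd ℂ) (g.eval ((starRingEnd ℂ) τ)) := by
  rw [eval_map]
  induction g using Polynomial.induction_on' with
  | add p q hp hq => rw [eval₂_add, eval_add, map_add, hp, hq]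
  | monomial n c => rw [eval₂_monomial, eval_monomial, map_mul, map_pow, Complex.conj_conj]

end EvalConj

section Main18

variable {A : Type*} [Ring A] [Algebra ℂ A] [StarRing A] [StarModule ℂ A] [Nontrivial A]

theorem starmul_roots_nonneg (P : PCN A) (halg : ∀ a : A, IsAlgebraic ℂ a) (a : A) :
    ∀ τ ∈ (minpoly ℂ (star a * a)).roots, 0 ≤ τ.re := by
  intro τ hτ
  have hsa : star (star a * a) = star a * a := by rw [star_mul, star_star]
  by_contra hneg
  push_neg at hneg
  have hconj : (starRingEnd ℂ) τ = τ := root_real P halg hsa hτ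
  have hτre : (τ.re : ℂ) = τ := Complex.conj_eq_iff_re.mp hconj
  have ht0neg : τ.re < 0 := hneg
  have hτ0 : τ ≠ 0 := by
    intro h0
    rw [h0] at ht0neg
    simp at ht0neg
  -- the projection e and p = e* e
  set l := lag (star a * a) τ with hl
  set e := aeval (star a * a) l with he
  have hidem : e * e = e := lagE_idem P halg hsa hτ
  have hhe : (star a * a) * e = τ • e := lagE_mul_left P halg hsa hτ
  have hse : star e = aeval (star a * a) (l.map (starRingEnd ℂ)) := star_aeval hsa _
  set p := star e * e with hp
  have hpsa : star p = p := by rw [hp, star_mul, star_star]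
  have hp0 : p ≠ 0 := lagP_ne_zero P halg hτ
  have hqeval : ∀ τ' ∈ (minpoly ℂ (star a * a)).roots,
      (l.map (starRingEnd ℂ) * l).eval τ' = (starRingEnd ℂ) (l.eval τ') * l.eval τ' := by
    intro τ' hτ'
    rw [eval_mul, eval_map_conj, root_real P halg hsa hτ']
  have hlval : ∀ τ' ∈ (minpoly ℂ (star a * a)).roots, l.eval τ' = 0 ∨ l.eval τ' = 1 := by
    intro τ' hτ'
    by_cases hne : τ = τ'
    · subst hne; right; exact lag_eval_self hτ
    · left; exact lag_eval_ne hτ' hne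
  have hpoly : p = aeval (star a * a) (l.map (starRingEnd ℂ) * l) := by
    rw [hp, hse, he, map_mul]
  have hpidem : p * p = p := by
    have h0 := aeval_eq_zero_of_root_vanish P halg hsa
      ((l.map (starRingEnd ℂ) * l) * (l.map (starRingEnd ℂ) * l)
        - (l.map (starRingEnd ℂ) * l)) ?_
    · rw [map_sub, map_mul, ← hpoly] at h0
      exact sub_eq_zero.mp h0
    · intro τ' hτ'
      rw [eval_sub, eval_mul, hqeval τ' hτ']
      rcases hlval τ' hτ' with h1 | h1 <;> simp [h1]
  -- x = a * e
  set x := a * e with hx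
  set sx := star x with hsx
  have hxx : sx * x = τ • p := by
    have h1 : sx * x = star e * ((star a * a) * e) := by
      rw [hsx, hx, star_mul]
      simp only [mul_assoc]
    rw [h1, hhe, mul_smul_comm, hp]
  -- q := sx * x satisfies q*q = τ • q
  have hq2 : (sx * x) * (sx * x) = τ • (sx * x) := by
    rw [hxx, smul_mul_assoc, mul_smul_comm, hpidem]
  set w := x * sx with hw
  have hwsa : star w = w := by rw [hw, hsx, star_mul, star_star]
  have hw2' : w * w = x * ((sx * x) * sx) := by
    rw [hw, mul_assoc x sx (x * sx), ← mul_assoc sx x sx]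
  have hw3' : w * (w * w) = x * (((sx * x) * (sx * x)) * sx) := by
    rw [hw2', hw, mul_assoc x sx _, ← mul_assoc sx x _, ← mul_assoc (sx * x) (sx * x) sx]
  have hw3 : w * (w * w) = τ • (w * w) := by
    rw [hw3', hw2', hq2, smul_mul_assoc, mul_smul_comm]
  have hw4 : w * (w * (w * w)) = τ • (τ • (w * w)) := by
    rw [hw3, mul_smul_comm, hw3]
  -- w * w = τ • w
  have hwnil : (w * w - τ • w) * (w * w - τ • w) = 0 := by
    have expand : (w * w - τ • w) * (w * w - τ • w)
        = w * (w * (w * w)) - τ • (w * (w * w)) - (τ • (w * (w * w)) - (τ * τ) • (w * w)) := by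
      simp only [sub_mul, mul_sub, smul_mul_assoc, mul_smul_comm, smul_smul, smul_sub]
      simp only [mul_assoc]
    rw [expand, hw4, hw3, smul_smul]
    abel
  have hwsub_sa : star (w * w - τ • w) = w * w - τ • w := by
    rw [star_sub, star_mul, hwsa, star_smul, hwsa, Complex.star_def, hconj]
  have hww : w * w = τ • w := by
    have h0 : w * w - τ • w = 0 := P.nilp hwsub_sa ⟨2, by rw [pow_two, hwnil]⟩
    exact sub_eq_zero.mp h0
  -- u := sx * x + x * sx  (= τ•p + w)
  set u := sx * x + w with hu
  have husa : star u = u := by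
    rw [hu, star_add, hwsa, star_mul, hsx, star_star]
  -- (i) u is a sum of two squares of selfadjoint elements
  set r2 : ℝ := (Real.sqrt 2)⁻¹ with hr2def
  have hr2 : (r2 : ℂ) * (r2 : ℂ) = (1/2 : ℂ) := by
    rw [← Complex.ofReal_mul]
    norm_cast
    rw [hr2def, ← mul_inv]
    rw [Real.mul_self_sqrt (by norm_num)]
    norm_num
  set c := x + sx with hc
  set d := Complex.I • (x - sx) with hd
  have hcsa : star c = c := by rw [hc, star_add, hsx, star_star, add_comm]
  have hdsa : star d = d := by
    rw [hd, star_smul, star_sub, hsx, star_star, Complex.star_def, Complex.conj_I]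
    rw [neg_smul, ← smul_neg, neg_sub]
  have hcd : c * c + d * d = (2 : ℂ) • u := by
    rw [hd, smul_mul_smul_comm, Complex.I_mul_I, hc, hu, two_smul]
    rw [neg_smul, one_smul]
    noncomm_ring
  set e₁ := (r2 : ℂ) • c with he₁
  set e₂ := (r2 : ℂ) • d with he₂
  have he₁sa : star e₁ = e₁ := by
    rw [he₁, star_smul, hcsa, Complex.star_def, Complex.conj_ofReal]
  have he₂sa : star e₂ = e₂ := by
    rw [he₂, star_smul, hdsa, Complex.star_def, Complex.conj_ofReal]
  have huee : u = e₁ * e₁ + e₂ * e₂ := by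
    rw [he₁, he₂, smul_mul_smul_comm, smul_mul_smul_comm, hr2, ← smul_add, hcd, smul_smul]
    norm_num
  have hu_nonneg : ∀ τ' ∈ (minpoly ℂ u).roots, 0 ≤ τ'.re := by
    rw [huee]
    exact add_roots_nonneg P halg (by rw [star_mul, he₁sa]) (by rw [star_mul, he₂sa])
      (sq_roots_nonneg P halg he₁sa) (sq_roots_nonneg P halg he₂sa)
  -- (iii) roots of -u are nonneg
  set y := ((-τ.re : ℝ) : ℂ) • p with hy
  have hysa : star y = y := by
    rw [hy, star_smul, hpsa, Complex.star_def, Complex.conj_ofReal]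
  have hyy : y * y = ((-τ.re : ℝ) : ℂ) • y := by
    rw [hy, smul_mul_smul_comm, hpidem, smul_smul]
  set z := -w with hz
  have hzsa : star z = z := by rw [hz, star_neg, hwsa]
  have hzz : z * z = ((-τ.re : ℝ) : ℂ) • z := by
    rw [hz, neg_mul_neg, hww, smul_neg, ← neg_smul]
    push_cast
    rw [neg_neg, hτre]
  have hyz : y + z = -u := by
    rw [hy, hz, hu, hxx, neg_add]
    push_cast
    rw [neg_smul, hτre]
  have hnegu_nonneg : ∀ τ' ∈ (minpoly ℂ (-u)).roots, 0 ≤ τ'.re := by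
    rw [← hyz]
    exact add_roots_nonneg P halg hysa hzsa
      (roots_nonneg_of_idem halg (by linarith) hyy)
      (roots_nonneg_of_idem halg (by linarith) hzz)
  -- (iv) u = 0
  have hu0 : u = 0 := by
    refine eq_zero_of_roots_zero P halg husa ?_
    intro τ' hτ'
    have h1 : 0 ≤ τ'.re := hu_nonneg τ' hτ'
    have h2 : -τ' ∈ (minpoly ℂ (-u)).roots := root_neg halg u hτ'
    have h3 : 0 ≤ (-τ').re := hnegu_nonneg _ h2
    rw [Complex.neg_re] at h3
    have h4 : τ'.re = 0 := le_antisymm (by linarith) h1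
    have h5 : τ'.im = 0 := Complex.conj_eq_iff_im.mp (root_real P halg husa hτ')
    exact Complex.ext h4 h5
  -- (v) contradiction
  have hwp : w = -(τ • p) := by
    have h6 := hu0
    rw [hu, hxx] at h6
    exact eq_neg_of_add_eq_zero_right h6
  have h1 : w * w = (τ * τ) • p := by
    rw [hwp, neg_mul_neg, smul_mul_smul_comm, hpidem]
  have h2 : w * w = -((τ * τ) • p) := by
    rw [hww, hwp, smul_neg, smul_smul]
  have h3 : (τ * τ) • p = 0 := by
    have h4 : (τ * τ) • p = -((τ * τ) • p) := h1.symm.trans h2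
    have h5 : (τ * τ) • p + (τ * τ) • p = 0 := add_eq_zero_iff_eq_neg.mpr h4
    rw [← two_smul ℂ, smul_smul] at h5
    rcases smul_eq_zero.mp h5 with h6 | h6
    · exact absurd h6 (by norm_num [hτ0, mul_eq_zero])
    · rw [h6, smul_zero]
  rcases smul_eq_zero.mp h3 with h6 | h6
  · exact hτ0 (by
      rcases mul_eq_zero.mp h6 with h7 | h7 <;> exact h7)
  · exact hp0 h6

end Main18

section Final

theorem final_aux {A : Type*} [Ring A] [Algebra ℂ A] [StarRing A] [StarModule ℂ A]
    [Nontrivial A] (P : PCN A) (halg : ∀ a : A, IsAlgebraic ℂ a) (a : A) :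
    ∃ b : A, star b * b = ((P.σ a ^ 2 : ℝ) : ℂ) • (1 : A) - star a * a := by
  classical
  have hsa : star (star a * a) = star a * a := by rw [star_mul, star_star]
  set r : ℝ := P.σ a ^ 2 with hr
  have hrσ : P.σ (star a * a) = r := P.hstar a
  have hroots : ∀ τ' ∈ (minpoly ℂ (star a * a)).roots,
      (τ'.re : ℂ) = τ' ∧ 0 ≤ τ'.re ∧ τ'.re ≤ r := by
    intro τ' hτ'
    refine ⟨Complex.conj_eq_iff_re.mp (root_real P halg hsa hτ'),
      starmul_roots_nonneg P halg a τ' hτ', ?_⟩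
    have h1 := root_abs_le P halg hsa hτ'
    rw [hrσ] at h1
    exact le_trans (Complex.re_le_norm τ') h1
  set g : Polynomial ℂ := ∑ τ' ∈ (minpoly ℂ (star a * a)).roots.toFinset,
      ((Real.sqrt (r - τ'.re) : ℝ) : ℂ) • lag (star a * a) τ' with hg
  set b := aeval (star a * a) g with hb
  have hgeval : ∀ τ0 ∈ (minpoly ℂ (star a * a)).roots,
      g.eval τ0 = ((Real.sqrt (r - τ0.re) : ℝ) : ℂ) := by
    intro τ0 hτ0
    rw [hg, eval_finset_sum]
    rw [Finset.sum_eq_single τ0]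
    · rw [eval_smul, lag_eval_self hτ0, smul_eq_mul, mul_one]
    · intro τ1 hτ1 hne
      rw [eval_smul, lag_eval_ne hτ0 hne, smul_eq_mul, mul_zero]
    · intro hn
      exact absurd (Multiset.mem_toFinset.mpr hτ0) hn
  have key : aeval (star a * a) (g.map (starRingEnd ℂ) * g - (C (r : ℂ) - X)) = 0 := by
    refine aeval_eq_zero_of_root_vanish P halg hsa _ ?_
    intro τ0 hτ0
    obtain ⟨hre, h0, hle⟩ := hroots τ0 hτ0
    rw [eval_sub, eval_mul, eval_map_conj, root_real P halg hsa hτ0, hgeval τ0 hτ0,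
      eval_sub, eval_C, eval_X, Complex.conj_ofReal]
    rw [← Complex.ofReal_mul, Real.mul_self_sqrt (by linarith), Complex.ofReal_sub, hre]
    ring
  refine ⟨b, ?_⟩
  have hstarb : star b = aeval (star a * a) (g.map (starRingEnd ℂ)) := star_aeval hsa g
  rw [map_sub, map_mul, map_sub, aeval_C, aeval_X] at key
  rw [← hb, ← hstarb] at key
  have := sub_eq_zero.mp key
  rw [this, Algebra.algebraMap_eq_smul_one]

end Final


/-- In a unital algebraic complex `*`-algebra with a pre-C*-norm `σ`,
for every `a` the element `σ(a)² · 1 − a* a` is positive, i.e. `a* a ≤ σ(a)² · 1`. -/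
theorem star_mul_self_le_norm_sq_smul_one (A : Type*) [Ring A] [Algebra ℂ A]
    [StarRing A] [StarModule ℂ A]
    (halg : ∀ a : A, IsAlgebraic ℂ a) (σ : A → ℝ)
    (hzero : ∀ a : A, σ a = 0 ↔ a = 0)
    (hsmul : ∀ (c : ℂ) (a : A), σ (c • a) = ‖c‖ * σ a)
    (hadd : ∀ a b : A, σ (a + b) ≤ σ a + σ b)
    (hmul : ∀ a b : A, σ (a * b) ≤ σ a * σ b)
    (hstar : ∀ a : A, σ (star a * a) = σ a ^ 2) :
    ∀ a : A, IsPositiveElem (((σ a : ℂ) ^ 2) • (1 : A) - star a * a) := by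
  intro a
  rcases subsingleton_or_nontrivial A with hS | hN
  · exact ⟨0, Fin.elim0, Subsingleton.elim _ _⟩
  · obtain ⟨b, hbb⟩ := final_aux ⟨σ, hzero, hsmul, hadd, hmul, hstar⟩ halg a
    refine ⟨1, fun _ => b, ?_⟩
    rw [Fin.sum_univ_one, hbb]
    norm_cast
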